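/- arXiv:math/0506331 — 2 statements merged into one kernel-verified Lean document; each statement's English description precedes it below -/
import Mathlib

section
/- If α ∈ Ω has bidegree (a, b) with a − b ≠ n and satisfies ω * α = 0, then α = ω * β for some β ∈ Ω; i.e. each fixed-auxiliary-degree subcomplex of (Ω, ω∧) with auxiliary degree different from n has zero cohomology. -/
open TensorProduct ExteriorAlgebra MvPolynomial

set_option synthInstance.maxHeartbeats 1000000
set_option maxHeartbeats 1000000

noncomputable section

variable (n : ℕ)

abbrev Om (n : ℕ) := MvPolynomial (Fin n ⊕ Fin n) ℝ ⊗[ℝ] ExteriorAlgebra ℝ ((Fin n ⊕ Fin n) → ℝ)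

def xx (i : Fin n) : Om n := X (Sum.inl i) ⊗ₜ 1
def dp (i : Fin n) : Om n := X (Sum.inr i) ⊗ₜ 1
def pp (i : Fin n) : Om n := 1 ⊗ₜ ι ℝ (Pi.single (Sum.inl i) 1)
def dx (i : Fin n) : Om n := 1 ⊗ₜ ι ℝ (Pi.single (Sum.inr i) 1)

def om (n : ℕ) : Om n := ∑ i : Fin n, dp n i * dx n i

/-- The odd derivation `∂/∂p_k` of the exterior factor of `Ω`:
left contraction with the dual-basis functional of `Pi.single (Sum.inl k) 1`. -/
def dpder (k : Fin n) :
    ExteriorAlgebra ℝ ((Fin n ⊕ Fin n) → ℝ) →ₗ[ℝ] ExteriorAlgebra ℝ ((Fin n ⊕ Fin n) → ℝ) :=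
  CliffordAlgebra.contractLeft (LinearMap.proj (Sum.inl k))

/-- Left contraction `∂/∂dx_k` of the exterior factor of `Ω` with the dual-basis functional of
`Pi.single (Sum.inr k) 1`. -/
def dxder (k : Fin n) :
    ExteriorAlgebra ℝ ((Fin n ⊕ Fin n) → ℝ) →ₗ[ℝ] ExteriorAlgebra ℝ ((Fin n ⊕ Fin n) → ℝ) :=
  CliffordAlgebra.contractLeft (LinearMap.proj (Sum.inr k))

/-- The de Rham operator `d` on `Ω`. -/
def dRham (n : ℕ) : Om n →ₗ[ℝ] Om n :=
  (∑ k : Fin n, LinearMap.mulLeft ℝ (dx n k) ∘ₗ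
      TensorProduct.map (MvPolynomial.pderiv (Sum.inl k)).toLinearMap LinearMap.id) +
  (∑ k : Fin n, LinearMap.mulLeft ℝ (dp n k) ∘ₗ
      TensorProduct.map LinearMap.id (dpder n k))

/-- The homotopy operator `L` on `Ω`. -/
def hoL (n : ℕ) : Om n →ₗ[ℝ] Om n :=
  ∑ k : Fin n, TensorProduct.map LinearMap.id (dxder n k) ∘ₗ
      TensorProduct.map (MvPolynomial.pderiv (Sum.inr k)).toLinearMap LinearMap.id

/-- `α ∈ Ω` has bidegree `(a, b)`: it is an ℝ-linear combination of elements `m ⊗ w` with `m`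
a monomial of total degree `b` in the variables `X (Sum.inr i)` and `w` a product of exterior
generators exactly `a` of which are of the form `ι (Pi.single (Sum.inr i) 1)`. -/
def HasBidegree (a b : ℕ) (α : Om n) : Prop :=
  α ∈ Submodule.span ℝ
    { t : Om n | ∃ (σ : (Fin n ⊕ Fin n) →₀ ℕ) (l : List (Fin n ⊕ Fin n)),
        (∑ i : Fin n, σ (Sum.inr i)) = b ∧
        (l.countP (fun i => i.isRight)) = a ∧
        t = (MvPolynomial.monomial σ (1 : ℝ)) ⊗ₜ
              (l.map (fun i => ι ℝ (Pi.single i (1 : ℝ)))).prod }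

/-- The coefficient algebra `F`. -/
abbrev Coef (n : ℕ) := MvPolynomial (Fin n) ℝ ⊗[ℝ] ExteriorAlgebra ℝ (Fin n → ℝ)

/-- Extension by zero `(Fin n → ℝ) →ₗ ((Fin n ⊕ Fin n) → ℝ)`, sending
`Pi.single i 1` to `Pi.single (Sum.inl i) 1`. -/
def inlExt : (Fin n → ℝ) →ₗ[ℝ] ((Fin n ⊕ Fin n) → ℝ) where
  toFun v := Sum.elim v 0
  map_add' u v := by ext i; cases i <;> simp
  map_smul' c v := by ext i; cases i <;> simp

/-- The algebra embedding `j : F → Ω` induced by `Sum.inl` on polynomial variables and on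
exterior generators. -/
def jmap (n : ℕ) : Coef n →ₐ[ℝ] Om n :=
  Algebra.TensorProduct.map (MvPolynomial.rename Sum.inl)
    (ExteriorAlgebra.lift ℝ ⟨(ι ℝ).comp (inlExt n), fun _ => ι_sq_zero _⟩)

/-- The coordinate volume form `dxᵛ = dx_1 * dx_2 * ⋯ * dx_n`. -/
def dxVol (n : ℕ) : Om n := (List.ofFn (dx n)).prod

/-- The operator `∂/∂p_k` on the exterior factor of `F`. -/
def pderC (k : Fin n) :
    ExteriorAlgebra ℝ (Fin n → ℝ) →ₗ[ℝ] ExteriorAlgebra ℝ (Fin n → ℝ) :=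
  CliffordAlgebra.contractLeft (LinearMap.proj k)

/-- The Batalin–Vilkovisky operator `Δ = ∑ₖ ∂²/∂x_k∂p_k` on `F`. -/
def bv (n : ℕ) : Coef n →ₗ[ℝ] Coef n :=
  ∑ k : Fin n, TensorProduct.map (MvPolynomial.pderiv k).toLinearMap LinearMap.id ∘ₗ
      TensorProduct.map LinearMap.id (pderC n k)

/-- The element `p_1 * p_2 * ⋯ * p_n` of `F`. -/
def pVol (n : ℕ) : Coef n :=
  (List.ofFn (fun i : Fin n => (1 : MvPolynomial (Fin n) ℝ) ⊗ₜ ι ℝ (Pi.single i (1 : ℝ)))).prod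

-- ===== auxiliary lemmas =====

lemma hoL_tmul (m : MvPolynomial (Fin n ⊕ Fin n) ℝ)
    (w : ExteriorAlgebra ℝ ((Fin n ⊕ Fin n) → ℝ)) :
    hoL n (m ⊗ₜ w) = ∑ k : Fin n, (pderiv (Sum.inr k) m) ⊗ₜ (dxder n k w) := by
  simp [hoL, LinearMap.sum_apply, TensorProduct.map_tmul]

lemma om_mul_tmul (m : MvPolynomial (Fin n ⊕ Fin n) ℝ)
    (w : ExteriorAlgebra ℝ ((Fin n ⊕ Fin n) → ℝ)) :
    om n * (m ⊗ₜ w) =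
      ∑ j : Fin n, (X (Sum.inr j) * m) ⊗ₜ (ι ℝ (Pi.single (Sum.inr j) 1) * w) := by
  simp [om, dp, dx, Finset.sum_mul, mul_assoc, Algebra.TensorProduct.tmul_mul_tmul]

lemma dxder_iota_mul (j k : Fin n) (w : ExteriorAlgebra ℝ ((Fin n ⊕ Fin n) → ℝ)) :
    dxder n k (ι ℝ (Pi.single (Sum.inr j) 1) * w)
      = ((Pi.single (Sum.inr j) (1:ℝ) : (Fin n ⊕ Fin n) → ℝ) (Sum.inr k)) • w -
        ι ℝ (Pi.single (Sum.inr j) 1) * dxder n k w := by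
  rw [dxder, CliffordAlgebra.contractLeft_ι_mul]; rfl

lemma pair_identity (j k : Fin n) (m : MvPolynomial (Fin n ⊕ Fin n) ℝ)
    (w : ExteriorAlgebra ℝ ((Fin n ⊕ Fin n) → ℝ)) :
    (pderiv (Sum.inr k) (X (Sum.inr j) * m)) ⊗ₜ (dxder n k (ι ℝ (Pi.single (Sum.inr j) 1) * w))
      + (X (Sum.inr j) * pderiv (Sum.inr k) m) ⊗ₜ (ι ℝ (Pi.single (Sum.inr j) 1) * dxder n k w)
    = if j = k then
        ((m ⊗ₜ w : Om n) + (X (Sum.inr k) * pderiv (Sum.inr k) m) ⊗ₜ w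
          - m ⊗ₜ (ι ℝ (Pi.single (Sum.inr k) 1) * dxder n k w))
      else 0 := by
  rw [pderiv_mul, dxder_iota_mul]
  by_cases h : j = k
  · subst h
    rw [if_pos rfl, pderiv_X_self, Pi.single_eq_same, one_mul, one_smul,
      add_tmul, tmul_sub, tmul_sub]
    abel
  · rw [if_neg h, pderiv_X_of_ne (by simp [h]),
      Pi.single_eq_of_ne (by simp [Ne.symm h]), zero_smul, zero_mul, zero_add, zero_sub,
      tmul_neg]
    abel

lemma key_tmul (m : MvPolynomial (Fin n ⊕ Fin n) ℝ)
    (w : ExteriorAlgebra ℝ ((Fin n ⊕ Fin n) → ℝ)) :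
    hoL n (om n * (m ⊗ₜ w)) + om n * hoL n (m ⊗ₜ w)
      = n • (m ⊗ₜ w : Om n)
        + (∑ k : Fin n, X (Sum.inr k) * pderiv (Sum.inr k) m) ⊗ₜ w
        - m ⊗ₜ (∑ k : Fin n, ι ℝ (Pi.single (Sum.inr k) 1) * dxder n k w) := by
  rw [om_mul_tmul, map_sum, hoL_tmul, Finset.mul_sum]
  simp_rw [hoL_tmul, om_mul_tmul]
  rw [Finset.sum_comm (t := Finset.univ) (s := Finset.univ)]
  rw [← Finset.sum_add_distrib]
  have : ∀ k : Fin n, ((∑ j : Fin n,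
      (pderiv (Sum.inr k) (X (Sum.inr j) * m)) ⊗ₜ
        (dxder n k (ι ℝ (Pi.single (Sum.inr j) 1) * w)))
      + ∑ j : Fin n, (X (Sum.inr j) * pderiv (Sum.inr k) m) ⊗ₜ
          (ι ℝ (Pi.single (Sum.inr j) 1) * dxder n k w) : Om n)
      = (m ⊗ₜ w : Om n) + (X (Sum.inr k) * pderiv (Sum.inr k) m) ⊗ₜ w
            - m ⊗ₜ (ι ℝ (Pi.single (Sum.inr k) 1) * dxder n k w) := by
    intro k
    rw [← Finset.sum_add_distrib]
    simp_rw [pair_identity]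
    rw [Finset.sum_ite_eq' Finset.univ k, if_pos (Finset.mem_univ _)]
  rw [Finset.sum_congr rfl fun k _ => this k]
  rw [Finset.sum_sub_distrib, Finset.sum_add_distrib, Finset.sum_const,
    Finset.card_univ, Fintype.card_fin, sum_tmul, tmul_sum]

lemma euler_monomial (σ : (Fin n ⊕ Fin n) →₀ ℕ) :
    ∑ k : Fin n, X (Sum.inr k) * pderiv (Sum.inr k) (monomial σ (1:ℝ))
      = (∑ i : Fin n, σ (Sum.inr i)) • monomial σ (1:ℝ) := by
  rw [Finset.sum_smul]
  refine Finset.sum_congr rfl fun k _ => ?_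
  rw [pderiv_monomial, one_mul]
  by_cases h : σ (Sum.inr k) = 0
  · simp [h]
  · have hσ : Finsupp.single (Sum.inr k) 1 + (σ - Finsupp.single (Sum.inr k) 1) = σ := by
      ext i
      rw [Finsupp.add_apply, Finsupp.tsub_apply]
      rcases eq_or_ne i (Sum.inr k) with rfl | hi
      · simp only [Finsupp.single_eq_same]; omega
      · simp [Finsupp.single_eq_of_ne' (Ne.symm hi)]
    rw [X, monomial_mul, one_mul, hσ, ← map_nsmul (monomial σ), nsmul_eq_mul, mul_one]

lemma dxder_gen_mul (i : Fin n ⊕ Fin n) (k : Fin n)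
    (w : ExteriorAlgebra ℝ ((Fin n ⊕ Fin n) → ℝ)) :
    dxder n k (ι ℝ (Pi.single i 1) * w)
      = ((Pi.single i (1:ℝ) : (Fin n ⊕ Fin n) → ℝ) (Sum.inr k)) • w -
        ι ℝ (Pi.single i 1) * dxder n k w := by
  rw [dxder, CliffordAlgebra.contractLeft_ι_mul]; rfl

lemma ndx_prod (l : List (Fin n ⊕ Fin n)) :
    ∑ k : Fin n, ι ℝ (Pi.single (Sum.inr k) 1) *
        dxder n k ((l.map (fun i => ι ℝ (Pi.single i (1:ℝ)))).prod)
      = (l.countP (fun i => i.isRight)) •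
          (l.map (fun i => ι ℝ (Pi.single i (1:ℝ)))).prod := by
  induction l with
  | nil =>
      simp [dxder, CliffordAlgebra.contractLeft_one]
  | cons i l ih =>
      rw [List.map_cons, List.prod_cons]
      simp_rw [dxder_gen_mul n i]
      have anticomm : ∀ k : Fin n,
          ι ℝ (Pi.single (Sum.inr k) (1:ℝ)) *
            (ι ℝ (Pi.single i (1:ℝ)) * dxder n k ((l.map (fun i => ι ℝ (Pi.single i (1:ℝ)))).prod))
          = -(ι ℝ (Pi.single i (1:ℝ)) * (ι ℝ (Pi.single (Sum.inr k) (1:ℝ)) *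
              dxder n k ((l.map (fun i => ι ℝ (Pi.single i (1:ℝ)))).prod))) := by
        intro k
        rw [← mul_assoc, ← mul_assoc, ← neg_mul]
        congr 1
        exact eq_neg_of_add_eq_zero_right (ι_add_mul_swap _ _)
      simp_rw [mul_sub, mul_smul_comm, anticomm]
      rw [Finset.sum_sub_distrib]
      simp_rw [Finset.sum_neg_distrib, ← Finset.mul_sum, ih, sub_neg_eq_add]
      rw [List.countP_cons]
      cases i with
      | inl j =>
          have hz : ∀ k : Fin n,
              ((Pi.single (Sum.inl j) (1:ℝ) : (Fin n ⊕ Fin n) → ℝ) (Sum.inr k)) = 0 :=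
            fun k => Pi.single_eq_of_ne (by simp) _
          simp only [hz, zero_smul, Finset.sum_const_zero, zero_add, Sum.isRight_inl,
            mul_smul_comm]
          simp
      | inr j =>
          have hs : ∀ k : Fin n,
              ((Pi.single (Sum.inr j) (1:ℝ) : (Fin n ⊕ Fin n) → ℝ) (Sum.inr k))
                = if k = j then 1 else 0 := by
            intro k
            rcases eq_or_ne k j with rfl | hk
            · simp
            · rw [Pi.single_eq_of_ne (by simpa using hk), if_neg hk]
          simp_rw [hs, ite_smul, one_smul, zero_smul]
          rw [Finset.sum_ite_eq' Finset.univ j, if_pos (Finset.mem_univ _), mul_smul_comm]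
          simp only [Sum.isRight_inr, if_pos, add_nsmul, one_nsmul]
          abel

lemma key_span (a b : ℕ) (α : Om n) (hα : HasBidegree n a b α) :
    hoL n (om n * α) + om n * hoL n α = (((n:ℝ) + b) - a) • α := by
  induction hα using Submodule.span_induction with
  | mem t ht =>
      obtain ⟨σ, l, hb, ha, rfl⟩ := ht
      rw [key_tmul, euler_monomial, ndx_prod, hb, ha,
        ← Nat.cast_smul_eq_nsmul ℝ b, ← Nat.cast_smul_eq_nsmul ℝ a,
        ← Nat.cast_smul_eq_nsmul ℝ n,
        TensorProduct.tmul_smul]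
      simp_rw [TensorProduct.smul_tmul']
      rw [← TensorProduct.add_tmul, ← TensorProduct.sub_tmul, ← add_smul, ← sub_smul]
  | zero => simp
  | add x y hx hy ihx ihy =>
      rw [mul_add, map_add, map_add, mul_add, smul_add, ← ihx, ← ihy]; abel
  | smul c x hx ih =>
      rw [mul_smul_comm, map_smul, map_smul, mul_smul_comm, ← smul_add, ih, smul_comm]

/-- If `α ∈ Ω` has bidegree `(a, b)` with `a − b ≠ n` and satisfies `ω * α = 0`,
then `α = ω * β` for some `β ∈ Ω`; i.e. each fixed-auxiliary-degree subcomplex of `(Ω, ω∧)`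
with auxiliary degree different from `n` has zero cohomology. -/
theorem aux_degree_acyclic (n : ℕ) (hn : 1 ≤ n) (a b : ℕ) (α : Om n)
    (hα : HasBidegree n a b α) (hdeg : (a : ℤ) - b ≠ n) (hclosed : om n * α = 0) :
    ∃ β : Om n, α = om n * β := by
  have hc : (((n:ℝ) + b) - a) ≠ 0 := by
    intro h
    apply hdeg
    have h2 : (a : ℤ) = (n : ℤ) + b := by exact_mod_cast (by linarith : (a:ℝ) = (n:ℝ) + b)
    omega
  have hkey := key_span n a b α hα
  rw [hclosed, map_zero, zero_add] at hkey
  refine ⟨(((n:ℝ) + b) - a)⁻¹ • hoL n α, ?_⟩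
  rw [mul_smul_comm, hkey, smul_smul, inv_mul_cancel₀ hc, one_smul]
end
end

section
/- For every f ∈ F there exists β ∈ Ω with d (j f * dxᵛ) = ω * β; i.e. de Rham's d maps each normal-form representative into the image of ω∧, so the differential induced by d on the cohomology of (Ω, ω∧) vanishes (part (2) of the Theorem in local Darboux coordinates). -/
open TensorProduct ExteriorAlgebra MvPolynomial

set_option synthInstance.maxHeartbeats 1000000
set_option maxHeartbeats 1000000

noncomputable section

variable (n : ℕ)

section AuxLemmas

variable {R : Type*} [CommRing R] {M : Type*} [AddCommGroup M] [Module R M]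


lemma aux_iota_mul_comm (m : M) (x : ExteriorAlgebra R M) :
    ι R m * x = CliffordAlgebra.involute x * ι R m := by
  induction x using CliffordAlgebra.induction with
  | algebraMap r => rw [AlgHom.commutes, Algebra.commutes]
  | ι v =>
      have h := ExteriorAlgebra.ι_add_mul_swap (R := R) v m
      have h2 : CliffordAlgebra.involute (ι R v) = -ι R v := CliffordAlgebra.involute_ι (Q := (0 : QuadraticForm R M)) v
      rw [h2, neg_mul]
      exact eq_neg_of_add_eq_zero_right h
  | mul a b ha hb => rw [← mul_assoc, ha, mul_assoc, hb, ← mul_assoc, map_mul]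
  | add a b ha hb => rw [mul_add, ha, hb, map_add, add_mul]

lemma aux_contract_mul (φ : Module.Dual R M) (x y : ExteriorAlgebra R M) :
    CliffordAlgebra.contractLeft φ (x * y) =
      CliffordAlgebra.contractLeft φ x * y + CliffordAlgebra.involute x * CliffordAlgebra.contractLeft φ y := by
  induction x using CliffordAlgebra.induction generalizing y with
  | algebraMap r =>
      rw [CliffordAlgebra.contractLeft_algebraMap_mul, CliffordAlgebra.contractLeft_algebraMap, zero_mul, zero_add,
        AlgHom.commutes]
  | ι v =>
      rw [CliffordAlgebra.contractLeft_ι_mul, CliffordAlgebra.contractLeft_ι,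
        CliffordAlgebra.involute_ι (Q := (0 : QuadraticForm R M)), Algebra.smul_def, neg_mul, sub_eq_add_neg]
  | mul a b ha hb =>
      rw [mul_assoc, ha, hb, ha b, map_mul]
      noncomm_ring
  | add a b ha hb =>
      simp only [add_mul, map_add, ha, hb]
      abel

lemma aux_contract_prod_zero (φ : Module.Dual R M) (l : List M)
    (h : ∀ m ∈ l, φ m = 0) :
    CliffordAlgebra.contractLeft φ ((l.map (ι R)).prod : ExteriorAlgebra R M) = 0 := by
  induction l with
  | nil => simpa using CliffordAlgebra.contractLeft_one (0 : QuadraticForm R M) φ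
  | cons a t ih =>
      rw [List.map_cons, List.prod_cons, CliffordAlgebra.contractLeft_ι_mul,
        h a List.mem_cons_self, ih (fun m hm => h m (List.mem_cons_of_mem a hm)),
        mul_zero, zero_smul, sub_zero]

end AuxLemmas

section OmLemmas


/-- The exterior-factor volume element. -/
def Vv (n : ℕ) : ExteriorAlgebra ℝ ((Fin n ⊕ Fin n) → ℝ) :=
  (List.ofFn fun i : Fin n => ι ℝ (Pi.single (Sum.inr i) (1 : ℝ))).prod

lemma tmul_one_prod (n : ℕ) (l : List (ExteriorAlgebra ℝ ((Fin n ⊕ Fin n) → ℝ))) :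
    ((l.map fun v => ((1 : MvPolynomial (Fin n ⊕ Fin n) ℝ) ⊗ₜ[ℝ] v : Om n)).prod : Om n)
      = (1 : MvPolynomial (Fin n ⊕ Fin n) ℝ) ⊗ₜ[ℝ] l.prod := by
  induction l with
  | nil => simp [Algebra.TensorProduct.one_def]
  | cons a t ih =>
      rw [List.map_cons, List.prod_cons, ih, List.prod_cons,
        Algebra.TensorProduct.tmul_mul_tmul, one_mul]

lemma dxVol_eq (n : ℕ) :
    dxVol n = (1 : MvPolynomial (Fin n ⊕ Fin n) ℝ) ⊗ₜ[ℝ] Vv n := by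
  have : List.ofFn (dx n) =
      (List.ofFn fun i : Fin n => ι ℝ (Pi.single (Sum.inr i) (1 : ℝ))).map
        (fun v => ((1 : MvPolynomial (Fin n ⊕ Fin n) ℝ) ⊗ₜ[ℝ] v : Om n)) := by
    rw [List.map_ofFn]
    rfl
  rw [dxVol, this, tmul_one_prod, Vv]

lemma e_mul_Vv (n : ℕ) (k : Fin n) :
    ι ℝ (Pi.single (Sum.inr k) (1 : ℝ)) * Vv n = 0 := by
  rw [Vv]
  exact ExteriorAlgebra.ι_mul_prod_list
    (fun i : Fin n => (Pi.single (Sum.inr i) (1 : ℝ) : (Fin n ⊕ Fin n) → ℝ)) k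

lemma contract_inl_Vv (n : ℕ) (k : Fin n) :
    CliffordAlgebra.contractLeft (LinearMap.proj (Sum.inl k) :
        Module.Dual ℝ ((Fin n ⊕ Fin n) → ℝ)) (Vv n) = 0 := by
  have : Vv n = ((List.ofFn fun i : Fin n =>
      (Pi.single (Sum.inr i) (1 : ℝ) : (Fin n ⊕ Fin n) → ℝ)).map (ι ℝ)).prod := by
    rw [List.map_ofFn]; rfl
  rw [this]
  refine aux_contract_prod_zero _ _ ?_
  intro m hm
  simp only [List.mem_ofFn] at hm
  obtain ⟨i, rfl⟩ := hm
  simp [LinearMap.proj_apply, Pi.single_eq_of_ne (by simp : Sum.inl k ≠ Sum.inr i)]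

lemma e_mul_contract_inr_Vv (n : ℕ) (i k : Fin n) :
    ι ℝ (Pi.single (Sum.inr i) (1 : ℝ)) *
      CliffordAlgebra.contractLeft (LinearMap.proj (Sum.inr k) :
        Module.Dual ℝ ((Fin n ⊕ Fin n) → ℝ)) (Vv n)
      = if i = k then Vv n else 0 := by
  have h := CliffordAlgebra.contractLeft_ι_mul (Q := (0 : QuadraticForm ℝ ((Fin n ⊕ Fin n) → ℝ)))
    (d := (LinearMap.proj (Sum.inr k) : Module.Dual ℝ ((Fin n ⊕ Fin n) → ℝ)))
    (Pi.single (Sum.inr i) (1 : ℝ)) (Vv n)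
  rw [e_mul_Vv, map_zero] at h
  have hval : (LinearMap.proj (Sum.inr k) : Module.Dual ℝ ((Fin n ⊕ Fin n) → ℝ))
      (Pi.single (Sum.inr i) (1 : ℝ)) = if i = k then (1 : ℝ) else 0 := by
    rcases eq_or_ne i k with rfl | hik
    · simp
    · simp [LinearMap.proj_apply, Pi.single_apply, hik, Ne.symm hik]
  rw [hval] at h
  have := sub_eq_zero.mp h.symm
  rw [← this]
  rcases eq_or_ne i k with rfl | hik
  · simp
  · simp [hik]

/-- The key computation: `dRham` of a pure-tensor normal form is explicitly `ω` times
something. -/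
lemma dRham_tmul_key (n : ℕ) (P : MvPolynomial (Fin n ⊕ Fin n) ℝ)
    (a : ExteriorAlgebra ℝ ((Fin n ⊕ Fin n) → ℝ)) :
    dRham n ((P ⊗ₜ[ℝ] a) * dxVol n) =
      om n * ∑ k : Fin n, P ⊗ₜ[ℝ]
        (CliffordAlgebra.involute (CliffordAlgebra.contractLeft (LinearMap.proj (Sum.inl k) :
            Module.Dual ℝ ((Fin n ⊕ Fin n) → ℝ)) a) *
          CliffordAlgebra.contractLeft (LinearMap.proj (Sum.inr k) :
            Module.Dual ℝ ((Fin n ⊕ Fin n) → ℝ)) (Vv n)) := by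
  classical
  rw [dxVol_eq, Algebra.TensorProduct.tmul_mul_tmul, mul_one]
  -- LHS
  rw [dRham, LinearMap.add_apply, LinearMap.sum_apply, LinearMap.sum_apply]
  have h1 : ∀ k : Fin n,
      (LinearMap.mulLeft ℝ (dx n k) ∘ₗ
        TensorProduct.map (MvPolynomial.pderiv (Sum.inl k)).toLinearMap LinearMap.id)
        (P ⊗ₜ[ℝ] (a * Vv n)) = 0 := by
    intro k
    rw [LinearMap.comp_apply, TensorProduct.map_tmul, LinearMap.mulLeft_apply,
      LinearMap.id_apply, dx, Algebra.TensorProduct.tmul_mul_tmul, one_mul,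
      ← mul_assoc, aux_iota_mul_comm, mul_assoc, e_mul_Vv, mul_zero,
      TensorProduct.tmul_zero]
  have h2 : ∀ k : Fin n,
      (LinearMap.mulLeft ℝ (dp n k) ∘ₗ
        TensorProduct.map LinearMap.id (dpder n k)) (P ⊗ₜ[ℝ] (a * Vv n))
      = (MvPolynomial.X (Sum.inr k) * P) ⊗ₜ[ℝ]
          (CliffordAlgebra.contractLeft (LinearMap.proj (Sum.inl k) :
            Module.Dual ℝ ((Fin n ⊕ Fin n) → ℝ)) a * Vv n) := by
    intro k
    rw [LinearMap.comp_apply, TensorProduct.map_tmul, LinearMap.mulLeft_apply,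
      LinearMap.id_apply, dpder, aux_contract_mul, contract_inl_Vv, mul_zero, add_zero,
      dp, Algebra.TensorProduct.tmul_mul_tmul, one_mul]
  simp only [h1, h2, Finset.sum_const_zero, zero_add]
  -- RHS
  rw [om, Finset.mul_sum]
  refine Finset.sum_congr rfl ?_
  intro k _
  rw [Finset.sum_mul]
  have h3 : ∀ i : Fin n,
      dp n i * dx n i * (P ⊗ₜ[ℝ]
        (CliffordAlgebra.involute (CliffordAlgebra.contractLeft (LinearMap.proj (Sum.inl k) :
            Module.Dual ℝ ((Fin n ⊕ Fin n) → ℝ)) a) *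
          CliffordAlgebra.contractLeft (LinearMap.proj (Sum.inr k) :
            Module.Dual ℝ ((Fin n ⊕ Fin n) → ℝ)) (Vv n)))
      = if i = k then (MvPolynomial.X (Sum.inr k) * P) ⊗ₜ[ℝ]
          (CliffordAlgebra.contractLeft (LinearMap.proj (Sum.inl k) :
            Module.Dual ℝ ((Fin n ⊕ Fin n) → ℝ)) a * Vv n) else 0 := by
    intro i
    rw [dp, dx, Algebra.TensorProduct.tmul_mul_tmul, mul_one, one_mul,
      Algebra.TensorProduct.tmul_mul_tmul, ← mul_assoc,
      aux_iota_mul_comm _ (CliffordAlgebra.involute _), CliffordAlgebra.involute_involute, mul_assoc,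
      e_mul_contract_inr_Vv]
    rcases eq_or_ne i k with rfl | hik
    · simp
    · simp [hik]
  rw [Finset.sum_congr rfl fun i _ => h3 i, Finset.sum_ite_eq' Finset.univ k, if_pos (Finset.mem_univ k)]

end OmLemmas

/-- For every `f ∈ F` there exists `β ∈ Ω` with `d (j f * dxᵛ) = ω * β`; i.e.
de Rham's `d` maps each normal-form representative into the image of `ω∧`, so the differential
induced by `d` on the cohomology of `(Ω, ω∧)` vanishes. -/
theorem deRham_normal_form_exact (n : ℕ) (hn : 1 ≤ n) (f : Coef n) :
    ∃ β : Om n, dRham n (jmap n f * dxVol n) = om n * β := by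
  have key : ∀ g : Coef n, ∃ β : Om n, dRham n (jmap n g * dxVol n) = om n * β := by
    intro g
    induction g using TensorProduct.induction_on with
    | zero => exact ⟨0, by simp⟩
    | tmul m w =>
        have hj : jmap n (m ⊗ₜ[ℝ] w) =
            (MvPolynomial.rename Sum.inl m) ⊗ₜ[ℝ]
              (ExteriorAlgebra.lift ℝ ⟨(ι ℝ).comp (inlExt n), fun _ => ι_sq_zero _⟩ w) := by
          rw [jmap, Algebra.TensorProduct.map_tmul]
        rw [hj]
        exact ⟨_, dRham_tmul_key n _ _⟩
    | add x y hx hy =>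
        obtain ⟨b1, h1⟩ := hx
        obtain ⟨b2, h2⟩ := hy
        exact ⟨b1 + b2, by rw [map_add, add_mul, map_add, h1, h2, mul_add]⟩
  exact key f
end
end
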